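/- If L is a finite distributive lattice, then every maximal CD-independent subset of L has exactly length(L) + |Atoms(L)| elements. -/

import Mathlib

open scoped Classical

/-- A subset `X` of a lattice with `⊥` is CD-independent if any two
incomparable members meet to `⊥`. -/
def CDIndep {L : Type*} [Lattice L] [OrderBot L] (X : Set L) : Prop :=
  ∀ x ∈ X, ∀ y ∈ X, ¬ x ≤ y → ¬ y ≤ x → x ⊓ y = ⊥

/-- `X` is a maximal CD-independent subset of `S` (within the ambient lattice). -/
def MaxCDIndepIn {L : Type*} [Lattice L] [OrderBot L] (S X : Set L) : Prop :=
  X ⊆ S ∧ CDIndep X ∧ ∀ Y ⊆ S, CDIndep Y → X ⊆ Y → Y = X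

/-- `X` is a maximal CD-independent subset of the whole lattice. -/
def MaxCDIndep {L : Type*} [Lattice L] [OrderBot L] (X : Set L) : Prop :=
  MaxCDIndepIn Set.univ X

/-- The length of the subposet `S`: the size of a longest chain contained in `S`, minus 1. -/
noncomputable def chainLen {L : Type*} [Lattice L] [Fintype L] (S : Set L) : ℕ :=
  ((Finset.univ.powerset.filter
      fun C : Finset L => ↑C ⊆ S ∧ IsChain (· ≤ ·) (C : Set L)).sup Finset.card) - 1

/-- The length of the finite lattice `L`. -/
noncomputable def latLen (L : Type*) [Lattice L] [Fintype L] : ℕ :=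
  chainLen (Set.univ : Set L)

/-- `u_*`: the meet of all lower covers of `u`. -/
noncomputable def lowstar {L : Type*} [Lattice L] [Fintype L] [BoundedOrder L] (u : L) : L :=
  (Finset.univ.filter fun v => v ⋖ u).inf id

/-- `L` is meet-distributive if every interval `[u_*, u]` (for `u ≠ ⊥`) is distributive. -/
def MeetDistrib (L : Type*) [Lattice L] [Fintype L] [BoundedOrder L] : Prop :=
  ∀ u : L, u ≠ ⊥ → ∀ x ∈ Set.Icc (lowstar u) u, ∀ y ∈ Set.Icc (lowstar u) u,
    ∀ z ∈ Set.Icc (lowstar u) u, x ⊓ (y ⊔ z) = (x ⊓ y) ⊔ (x ⊓ z)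

/-- Lower semimodularity: `a ⋖ a ⊔ b` implies `a ⊓ b ⋖ b`. -/
def LowerSemimodular (L : Type*) [Lattice L] : Prop :=
  ∀ a b : L, a ⋖ a ⊔ b → a ⊓ b ⋖ b

/-- The number of atoms of `L`. -/
noncomputable def atomsCard (L : Type*) [Lattice L] [OrderBot L] : ℕ :=
  {a : L | IsAtom a}.ncard

/-- `b` is the pseudocomplement of `a`: the largest element meeting `a` to `⊥`. -/
def PseudoCompl {L : Type*} [Lattice L] [OrderBot L] (a b : L) : Prop :=
  a ⊓ b = ⊥ ∧ ∀ x, a ⊓ x = ⊥ → x ≤ b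

/-- `(a, b)` is a pseudocomplemented pair: each is the pseudocomplement of the other. -/
def PseudoPair {L : Type*} [Lattice L] [OrderBot L] (a b : L) : Prop :=
  PseudoCompl a b ∧ PseudoCompl b a

/-- An element is meet-irreducible if it has exactly one cover. -/
def MeetIrred {L : Type*} [Lattice L] (a : L) : Prop :=
  ∃! b, a ⋖ b

/-- `L` is dually slim: no three-element antichain of meet-irreducible elements. -/
def DuallySlim (L : Type*) [Lattice L] : Prop :=
  ¬ ∃ x y z : L, MeetIrred x ∧ MeetIrred y ∧ MeetIrred z ∧
    ¬ x ≤ y ∧ ¬ y ≤ x ∧ ¬ x ≤ z ∧ ¬ z ≤ x ∧ ¬ y ≤ z ∧ ¬ z ≤ y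

/-! ### Auxiliary rank theory -/

section Rank

variable {L : Type*} [Lattice L] [Fintype L]

/-- The size of a longest chain contained in `S` (no `- 1`). -/
noncomputable def Fsup (S : Set L) : ℕ :=
  ((Finset.univ.powerset.filter
      fun C : Finset L => ↑C ⊆ S ∧ IsChain (· ≤ ·) (C : Set L)).sup Finset.card)

lemma chainLen_eq_Fsup (S : Set L) : chainLen S = Fsup S - 1 := rfl

lemma card_le_Fsup {S : Set L} {C : Finset L} (h1 : ↑C ⊆ S)
    (h2 : IsChain (· ≤ ·) (C : Set L)) : C.card ≤ Fsup S :=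
  Finset.le_sup (by
    simp only [Finset.mem_filter, Finset.mem_powerset]
    exact ⟨Finset.subset_univ _, h1, h2⟩)

lemma exists_max_chain (S : Set L) :
    ∃ C : Finset L, ↑C ⊆ S ∧ IsChain (· ≤ ·) (C : Set L) ∧ C.card = Fsup S := by
  obtain ⟨C, hC, hcard⟩ := Finset.exists_mem_eq_sup
    (Finset.univ.powerset.filter
      fun C : Finset L => ↑C ⊆ S ∧ IsChain (· ≤ ·) (C : Set L))
    ⟨∅, by
      simp only [Finset.mem_filter, Finset.mem_powerset]
      refine ⟨Finset.empty_subset _, by simp, by simp⟩⟩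
    Finset.card
  simp only [Finset.mem_filter, Finset.mem_powerset] at hC
  exact ⟨C, hC.2.1, hC.2.2, hcard.symm⟩

variable [OrderBot L]

/-- The rank (size of a longest chain in `[⊥, x]`). -/
noncomputable def Rk (x : L) : ℕ := Fsup (Set.Iic x)

lemma Rk_pos (x : L) : 1 ≤ Rk x := by
  have := card_le_Fsup (S := Set.Iic x) (C := {x})
    (by simp) (by simp)
  simpa [Rk] using this

lemma Rk_bot : Rk (⊥ : L) = 1 := by
  refine le_antisymm (Finset.sup_le fun C hC => ?_) (Rk_pos ⊥)
  simp only [Finset.mem_filter, Finset.mem_powerset] at hC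
  refine Finset.card_le_one.2 (fun a ha b hb => ?_) |>.trans ?_
  · have ha' : a ≤ ⊥ := hC.2.1 ha
    have hb' : b ≤ ⊥ := hC.2.1 hb
    rw [le_bot_iff.1 ha', le_bot_iff.1 hb']
  · norm_num

lemma Rk_mono {x y : L} (h : x ≤ y) : Rk x ≤ Rk y :=
  Finset.sup_le fun C hC => by
    simp only [Finset.mem_filter, Finset.mem_powerset] at hC
    exact card_le_Fsup (hC.2.1.trans (Set.Iic_subset_Iic.2 h)) hC.2.2

lemma Rk_strict {x y : L} (h : x < y) : Rk x < Rk y := by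
  obtain ⟨C, hCs, hCc, hCcard⟩ := exists_max_chain (Set.Iic x)
  have hy : y ∉ C := fun hyC => absurd (hCs hyC) (by simpa using h.not_ge)
  have hchain : IsChain (· ≤ ·) ((insert y C : Finset L) : Set L) := by
    rw [Finset.coe_insert]
    exact hCc.insert fun b hb _ => Or.inr ((hCs hb).trans h.le)
  have hsub : ((insert y C : Finset L) : Set L) ⊆ Set.Iic y := by
    rw [Finset.coe_insert]
    rintro w (rfl | hw)
    · exact le_rfl
    · exact (hCs hw).trans h.le
  have := card_le_Fsup hsub hchain
  rw [Finset.card_insert_of_notMem hy, hCcard] at this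
  exact lt_of_lt_of_le (Nat.lt_succ_self _) this

lemma exists_lt_rk {x : L} (hx : ⊥ < x) : ∃ z, z < x ∧ Rk x = Rk z + 1 := by
  obtain ⟨C, hCs, hCc, hCcard⟩ := exists_max_chain (Set.Iic x)
  -- replace C with insert x C
  set C' : Finset L := insert x C with hC'
  have hsub : (C' : Set L) ⊆ Set.Iic x := by
    rw [hC', Finset.coe_insert]
    rintro w (rfl | hw)
    · exact le_rfl
    · exact hCs hw
  have hchain : IsChain (· ≤ ·) (C' : Set L) := by
    rw [hC', Finset.coe_insert]
    exact hCc.insert fun b hb _ => Or.inr (hCs hb)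
  have hcard : C'.card = Rk x := by
    refine le_antisymm (card_le_Fsup hsub hchain) ?_
    exact le_trans (le_of_eq hCcard.symm) (Finset.card_le_card (Finset.subset_insert _ _))
  have hxC' : x ∈ C' := Finset.mem_insert_self _ _
  have hRk2 : 2 ≤ Rk x := by
    have h2 : ({⊥, x} : Finset L).card = 2 := by
      rw [Finset.card_insert_of_notMem (by simpa using hx.ne), Finset.card_singleton]
    have := card_le_Fsup (S := Set.Iic x) (C := {⊥, x})
      (by intro w hw; simp at hw; rcases hw with rfl | rfl <;> simp)
      (by
        rw [Finset.coe_insert, Finset.coe_singleton]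
        exact (Set.subsingleton_singleton).isChain.insert fun b hb _ => Or.inl (by simp_all))
    have hd : Rk x = Fsup (Set.Iic x) := rfl
    omega
  have hD : (C'.erase x).Nonempty := by
    rw [← Finset.card_pos, Finset.card_erase_of_mem hxC', hcard]
    omega
  obtain ⟨z0, hz0⟩ := hD
  obtain ⟨z, hz0z, hzmax⟩ := Finite.exists_le_maximal (p := (· ∈ C'.erase x)) hz0
  have hzmem := hzmax.prop
  have hzC' : z ∈ C' := Finset.mem_of_mem_erase hzmem
  have hzx : z < x :=
    lt_of_le_of_ne (hsub hzC') (Finset.ne_of_mem_erase hzmem)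
  have herasesub : ((C'.erase x : Finset L) : Set L) ⊆ Set.Iic z := by
    intro w hw
    simp only [Finset.coe_erase, Set.mem_diff, Finset.mem_coe] at hw
    rcases eq_or_ne w z with rfl | hne
    · exact le_rfl
    · rcases hchain (by exact_mod_cast hw.1) (by exact_mod_cast hzC') hne with h | h
      · exact h
      · exact (hzmax.eq_of_le (Finset.mem_erase.2 ⟨by simpa using hw.2, hw.1⟩) h).ge
  have herasechain : IsChain (· ≤ ·) ((C'.erase x : Finset L) : Set L) :=
    hchain.mono (by exact_mod_cast Finset.erase_subset _ _)
  have hle : C'.card - 1 ≤ Rk z := by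
    have := card_le_Fsup herasesub herasechain
    rwa [Finset.card_erase_of_mem hxC'] at this
  have hlt : Rk z < Rk x := Rk_strict hzx
  exact ⟨z, hzx, by omega⟩

lemma covBy_of_maximal_lt {z x : L} (h : Maximal (· < x) z) : z ⋖ x :=
  ⟨h.prop, fun c hzc hcx => hzc.not_ge (h.le_of_ge hcx hzc.le)⟩

lemma exists_covBy_lt {y : L} (hy : ⊥ < y) : ∃ z, z ⋖ y := by
  obtain ⟨z, -, hz⟩ := Finite.exists_le_maximal (p := (· < y)) hy
  exact ⟨z, covBy_of_maximal_lt hz⟩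

lemma exists_covBy_between {z x : L} (h : z < x) : ∃ z', z ≤ z' ∧ z' ⋖ x := by
  obtain ⟨z', hzz', hz'⟩ := Finite.exists_le_maximal (p := (· < x)) h
  exact ⟨z', hzz', covBy_of_maximal_lt hz'⟩

end Rank


section DistribRank

variable {L : Type*} [DistribLattice L] [Fintype L] [OrderBot L]

lemma rk_covBy_aux : ∀ n : ℕ, ∀ x y : L, Rk x ≤ n → y ⋖ x → Rk x = Rk y + 1 := by
  intro n
  induction n with
  | zero => intro x y hn _; have := Rk_pos x; omega
  | succ n ih =>
    intro x y hn hc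
    have hbx : ⊥ < x := bot_le.trans_lt hc.lt
    obtain ⟨z, hzx, hz⟩ := exists_lt_rk hbx
    obtain ⟨z', hzz', hz'c⟩ := exists_covBy_between hzx
    have hrkz' : Rk x = Rk z' + 1 := by
      have h1 : Rk z ≤ Rk z' := Rk_mono hzz'
      have h2 : Rk z' < Rk x := Rk_strict hz'c.lt
      omega
    rcases eq_or_ne y z' with rfl | hne
    · exact hrkz'
    · have h1 : y < y ⊔ z' := by
        rcases lt_or_eq_of_le (le_sup_left : y ≤ y ⊔ z') with h | h
        · exact h
        · exfalso
          have hz'y : z' ≤ y := le_sup_right.trans h.ge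
          rcases lt_or_eq_of_le hz'y with h2 | h2
          · exact hz'c.2 h2 hc.lt
          · exact hne h2.symm
      have hsup : y ⊔ z' = x := by
        rcases lt_or_eq_of_le (sup_le hc.lt.le hz'c.lt.le) with h | h
        · exact absurd h (hc.2 h1)
        · exact h
      have hy1 : y ⋖ y ⊔ z' := hsup ▸ hc
      have hy2 : z' ⋖ y ⊔ z' := hsup ▸ hz'c
      have hm1 : y ⊓ z' ⋖ y := inf_covBy_of_covBy_sup_of_covBy_sup_left hy1 hy2
      have hm2 : y ⊓ z' ⋖ z' := inf_covBy_of_covBy_sup_of_covBy_sup_right hy1 hy2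
      have e1 : Rk z' = Rk (y ⊓ z') + 1 := ih z' (y ⊓ z') (by omega) hm2
      have e2 : Rk y = Rk (y ⊓ z') + 1 := by
        have := Rk_strict hc.lt
        exact ih y (y ⊓ z') (by omega) hm1
      omega

lemma rk_covBy {x y : L} (hc : y ⋖ x) : Rk x = Rk y + 1 :=
  rk_covBy_aux (Rk x) x y le_rfl hc

lemma rk_atom {a : L} (ha : IsAtom a) : Rk a = 2 := by
  rw [rk_covBy ha.bot_covBy, Rk_bot]

lemma rk_sup_aux : ∀ n : ℕ, ∀ a b : L, Rk b ≤ n → a ⊓ b = ⊥ →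
    Rk (a ⊔ b) + 1 = Rk a + Rk b := by
  intro n
  induction n with
  | zero => intro a b hn _; have := Rk_pos b; omega
  | succ n ih =>
    intro a b hn hd
    rcases eq_or_ne b ⊥ with rfl | hb
    · rw [sup_bot_eq, Rk_bot]
    · obtain ⟨b', hb'c⟩ := exists_covBy_lt (bot_lt_iff_ne_bot.2 hb)
      have hrkb : Rk b = Rk b' + 1 := rk_covBy hb'c
      have hd' : a ⊓ b' = ⊥ := le_bot_iff.1 (hd ▸ inf_le_inf_left a hb'c.lt.le)
      have hcb : (a ⊔ b') ⊓ b = b' := by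
        rw [inf_comm, inf_sup_left, inf_comm b a, hd, inf_comm b b',
          inf_eq_left.2 hb'c.lt.le, bot_sup_eq]
      have hcc : a ⊔ b' ⋖ (a ⊔ b') ⊔ b :=
        covBy_sup_of_inf_covBy_right (by rw [hcb]; exact hb'c)
      have hsupeq : (a ⊔ b') ⊔ b = a ⊔ b := by
        rw [sup_assoc, sup_eq_right.2 hb'c.lt.le]
      have h1 : Rk (a ⊔ b) = Rk (a ⊔ b') + 1 := by
        rw [← hsupeq]; exact rk_covBy hcc
      have h2 : Rk (a ⊔ b') + 1 = Rk a + Rk b' := ih a b' (by omega) hd'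
      omega

lemma rk_sup {a b : L} (hd : a ⊓ b = ⊥) : Rk (a ⊔ b) + 1 = Rk a + Rk b :=
  rk_sup_aux (Rk b) a b le_rfl hd

end DistribRank

section MaxCD

variable {L : Type*} [Lattice L] [OrderBot L] {X : Set L}

lemma mem_of_addable (hX : MaxCDIndep X) {z : L}
    (h : ∀ w ∈ X, z ≤ w ∨ w ≤ z ∨ w ⊓ z = ⊥) : z ∈ X := by
  have hcd : CDIndep (insert z X) := by
    intro a ha b hb hab hba
    rcases Set.mem_insert_iff.1 ha with rfl | haX
    · rcases Set.mem_insert_iff.1 hb with rfl | hbX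
      · exact absurd le_rfl hab
      · rcases h b hbX with h' | h' | h'
        · exact absurd h' hab
        · exact absurd h' hba
        · rw [inf_comm]; exact h'
    · rcases Set.mem_insert_iff.1 hb with rfl | hbX
      · rcases h a haX with h' | h' | h'
        · exact absurd h' hba
        · exact absurd h' hab
        · exact h'
      · exact hX.2.1 a haX b hbX hab hba
  have := hX.2.2 (insert z X) (Set.subset_univ _) hcd (Set.subset_insert _ _)
  rw [← this]; exact Set.mem_insert _ _

lemma atom_mem (hX : MaxCDIndep X) {a : L} (ha : IsAtom a) : a ∈ X := by
  refine mem_of_addable hX fun w hw => ?_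
  by_cases h1 : a ≤ w
  · exact Or.inl h1
  · by_cases h2 : w ≤ a
    · exact Or.inr (Or.inl h2)
    · refine Or.inr (Or.inr ?_)
      rcases ha.le_iff.1 (inf_le_right : w ⊓ a ≤ a) with h | h
      · exact h
      · exact absurd (h ▸ inf_le_left : a ≤ w) h1

lemma top_mem' [OrderTop L] (hX : MaxCDIndep X) : (⊤ : L) ∈ X :=
  mem_of_addable hX fun w _ => Or.inr (Or.inl le_top)

lemma bot_mem' (hX : MaxCDIndep X) : (⊥ : L) ∈ X :=
  mem_of_addable hX fun w _ => Or.inl bot_le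

lemma comparable_of_inf_ne_bot (hX : MaxCDIndep X) {w w' : L} (hw : w ∈ X) (hw' : w' ∈ X)
    (h : w ⊓ w' ≠ ⊥) : w ≤ w' ∨ w' ≤ w := by
  by_contra hc
  push_neg at hc
  exact h (hX.2.1 w hw w' hw' hc.1 hc.2)

end MaxCD

section MainCount

variable {L : Type*} [DistribLattice L] [Fintype L] [BoundedOrder L]

lemma main_count (X : Set L) (hX : MaxCDIndep X) :
    ∀ n : ℕ, ∀ x : L, Rk x ≤ n → x ∈ X → ⊥ < x →
      {w : L | w ∈ X ∧ ⊥ < w ∧ w ≤ x}.ncard + 2 =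
        Rk x + {b : L | IsAtom b ∧ b ≤ x}.ncard := by
  intro n
  induction n with
  | zero => intro x hn _ _; have := Rk_pos x; omega
  | succ n ih =>
    intro x hn hxX hx
    by_cases hatom : IsAtom x
    · have hfs : {w : L | w ∈ X ∧ ⊥ < w ∧ w ≤ x} = {x} := by
        ext w
        simp only [Set.mem_setOf_eq, Set.mem_singleton_iff]
        constructor
        · rintro ⟨-, hwb, hwle⟩
          rcases hatom.le_iff.1 hwle with rfl | h
          · exact absurd rfl hwb.ne'
          · exact h
        · rintro rfl; exact ⟨hxX, hx, le_rfl⟩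
      have has : {b : L | IsAtom b ∧ b ≤ x} = {x} := by
        ext b
        simp only [Set.mem_setOf_eq, Set.mem_singleton_iff]
        constructor
        · rintro ⟨hb, hble⟩
          rcases hatom.le_iff.1 hble with rfl | h
          · exact absurd rfl hb.1
          · exact h
        · rintro rfl; exact ⟨hatom, le_rfl⟩
      rw [hfs, has, Set.ncard_singleton, rk_atom hatom]
    · -- x is not an atom: find an atom below it, hence a "child"
      obtain ⟨a0, ha0atom, ha0le⟩ :=
        (IsAtomic.eq_bot_or_exists_atom_le x).resolve_left hx.ne'
      have ha0X : a0 ∈ X := atom_mem hX ha0atom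
      have ha0lt : a0 < x := lt_of_le_of_ne ha0le (fun h => hatom (h ▸ ha0atom))
      obtain ⟨y1, -, hy1max⟩ := Finite.exists_le_maximal
        (p := fun w => w ∈ X ∧ ⊥ < w ∧ w < x) ⟨ha0X, bot_lt_iff_ne_bot.2 ha0atom.1, ha0lt⟩
      obtain ⟨hy1X, hy1bot, hy1lt⟩ := hy1max.prop
      by_cases hall : ∀ w, (w ∈ X ∧ ⊥ < w ∧ w < x) → w ≤ y1
      · -- unary case: y1 ⋖ x
        have hcov : y1 ⋖ x := by
          refine ⟨hy1lt, fun u hy1u hux => ?_⟩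
          have huX : u ∈ X := by
            refine mem_of_addable hX fun w hw => ?_
            by_cases hwx : w ≤ x
            · rcases eq_or_lt_of_le hwx with rfl | hwx'
              · exact Or.inl hux.le
              · rcases eq_or_lt_of_le (bot_le : ⊥ ≤ w) with rfl | hwbot
                · exact Or.inr (Or.inl bot_le)
                · exact Or.inr (Or.inl ((hall w ⟨hw, hwbot, hwx'⟩).trans hy1u.le))
            · by_cases hxw : x ≤ w
              · exact Or.inl (hux.le.trans hxw)
              · refine Or.inr (Or.inr ?_)
                have hwxbot : w ⊓ x = ⊥ := hX.2.1 w hw x hxX hwx hxw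
                exact le_bot_iff.1 (hwxbot ▸ inf_le_inf_left w hux.le)
          exact hy1u.not_ge (hall u ⟨huX, hy1bot.trans hy1u, hux⟩)
        have hfset : {w : L | w ∈ X ∧ ⊥ < w ∧ w ≤ x} =
            insert x {w : L | w ∈ X ∧ ⊥ < w ∧ w ≤ y1} := by
          ext w
          simp only [Set.mem_insert_iff, Set.mem_setOf_eq]
          constructor
          · rintro ⟨hwX, hwb, hwle⟩
            rcases eq_or_lt_of_le hwle with rfl | hlt
            · exact Or.inl rfl
            · exact Or.inr ⟨hwX, hwb, hall w ⟨hwX, hwb, hlt⟩⟩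
          · rintro (rfl | ⟨hwX, hwb, hwle⟩)
            · exact ⟨hxX, hx, le_rfl⟩
            · exact ⟨hwX, hwb, hwle.trans hy1lt.le⟩
        have hxnot : x ∉ {w : L | w ∈ X ∧ ⊥ < w ∧ w ≤ y1} :=
          fun h => absurd h.2.2 hy1lt.not_ge
        have haset : {b : L | IsAtom b ∧ b ≤ x} = {b : L | IsAtom b ∧ b ≤ y1} := by
          ext b
          simp only [Set.mem_setOf_eq]
          refine ⟨fun ⟨hb, hble⟩ => ⟨hb, ?_⟩, fun ⟨hb, hble⟩ => ⟨hb, hble.trans hy1lt.le⟩⟩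
          have hbX : b ∈ X := atom_mem hX hb
          have hblt : b < x := lt_of_le_of_ne hble (fun h => hatom (h ▸ hb))
          exact hall b ⟨hbX, bot_lt_iff_ne_bot.2 hb.1, hblt⟩
        have hrk : Rk x = Rk y1 + 1 := rk_covBy hcov
        have hih := ih y1 (by omega) hy1X hy1bot
        rw [hfset, haset, Set.ncard_insert_of_notMem hxnot (Set.toFinite _)]
        omega
      · -- binary case
        push_neg at hall
        obtain ⟨w0, hw0P, hw0n⟩ := hall
        obtain ⟨y2, hw0y2, hy2max⟩ := Finite.exists_le_maximal
          (p := fun w => w ∈ X ∧ ⊥ < w ∧ w < x) hw0P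
        obtain ⟨hy2X, hy2bot, hy2lt⟩ := hy2max.prop
        have hne : y1 ≠ y2 := fun h => hw0n (h ▸ hw0y2)
        have h12 : ¬ y1 ≤ y2 := fun h => hne (hy1max.eq_of_le hy2max.prop h)
        have h21 : ¬ y2 ≤ y1 := fun h => hne (hy2max.eq_of_le hy1max.prop h).symm
        have hdisj : y1 ⊓ y2 = ⊥ := hX.2.1 y1 hy1X y2 hy2X h12 h21
        have hsub : ∀ w, (w ∈ X ∧ ⊥ < w ∧ w < x) → w ⊓ (y1 ⊔ y2) ≠ ⊥ →
            w ≤ y1 ∨ w ≤ y2 := by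
          rintro w ⟨hwX, hwb, hwlt⟩ hnd
          rw [inf_sup_left] at hnd
          have hcases : w ⊓ y1 ≠ ⊥ ∨ w ⊓ y2 ≠ ⊥ := by
            by_contra hc
            push_neg at hc
            rw [hc.1, hc.2, sup_idem] at hnd
            exact hnd rfl
          rcases hcases with h | h
          · rcases comparable_of_inf_ne_bot hX hwX hy1X h with h' | h'
            · exact Or.inl h'
            · exact Or.inl (hy1max.eq_of_le ⟨hwX, hwb, hwlt⟩ h').ge
          · rcases comparable_of_inf_ne_bot hX hwX hy2X h with h' | h'
            · exact Or.inr h'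
            · exact Or.inr (hy2max.eq_of_le ⟨hwX, hwb, hwlt⟩ h').ge
        have hzle : y1 ⊔ y2 ≤ x := sup_le hy1lt.le hy2lt.le
        have hzX : y1 ⊔ y2 ∈ X := by
          refine mem_of_addable hX fun w hw => ?_
          by_cases hwx : w ≤ x
          · rcases eq_or_lt_of_le hwx with rfl | hwlt
            · exact Or.inl hzle
            · rcases eq_or_lt_of_le (bot_le : ⊥ ≤ w) with rfl | hwbot
              · exact Or.inr (Or.inl bot_le)
              · by_cases hnd : w ⊓ (y1 ⊔ y2) = ⊥
                · exact Or.inr (Or.inr hnd)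
                · rcases hsub w ⟨hw, hwbot, hwlt⟩ hnd with h | h
                  · exact Or.inr (Or.inl (h.trans le_sup_left))
                  · exact Or.inr (Or.inl (h.trans le_sup_right))
          · by_cases hxw : x ≤ w
            · exact Or.inl (hzle.trans hxw)
            · refine Or.inr (Or.inr ?_)
              have hwxbot : w ⊓ x = ⊥ := hX.2.1 w hw x hxX hwx hxw
              exact le_bot_iff.1 (hwxbot ▸ inf_le_inf_left w hzle)
        have hzx : y1 ⊔ y2 = x := by
          rcases lt_or_eq_of_le hzle with hlt | h
          · exfalso
            have hP : (y1 ⊔ y2) ∈ X ∧ ⊥ < y1 ⊔ y2 ∧ y1 ⊔ y2 < x :=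
              ⟨hzX, hy1bot.trans_le le_sup_left, hlt⟩
            have := hy1max.eq_of_le hP le_sup_left
            exact h21 (le_sup_right.trans this.ge)
          · exact h
        have hsplit : ∀ w, (w ∈ X ∧ ⊥ < w ∧ w < x) → w ≤ y1 ∨ w ≤ y2 := by
          intro w hw
          refine hsub w hw ?_
          rw [hzx, inf_eq_left.2 hw.2.2.le]
          exact hw.2.1.ne'
        have hxna : ¬ IsAtom x := hatom
        have hfset : {w : L | w ∈ X ∧ ⊥ < w ∧ w ≤ x} =
            insert x ({w : L | w ∈ X ∧ ⊥ < w ∧ w ≤ y1} ∪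
              {w : L | w ∈ X ∧ ⊥ < w ∧ w ≤ y2}) := by
          ext w
          simp only [Set.mem_insert_iff, Set.mem_union, Set.mem_setOf_eq]
          constructor
          · rintro ⟨hwX, hwb, hwle⟩
            rcases eq_or_lt_of_le hwle with rfl | hlt
            · exact Or.inl rfl
            · rcases hsplit w ⟨hwX, hwb, hlt⟩ with h | h
              · exact Or.inr (Or.inl ⟨hwX, hwb, h⟩)
              · exact Or.inr (Or.inr ⟨hwX, hwb, h⟩)
          · rintro (rfl | ⟨hwX, hwb, hwle⟩ | ⟨hwX, hwb, hwle⟩)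
            · exact ⟨hxX, hx, le_rfl⟩
            · exact ⟨hwX, hwb, hwle.trans hy1lt.le⟩
            · exact ⟨hwX, hwb, hwle.trans hy2lt.le⟩
        have haset : {b : L | IsAtom b ∧ b ≤ x} =
            {b : L | IsAtom b ∧ b ≤ y1} ∪ {b : L | IsAtom b ∧ b ≤ y2} := by
          ext b
          simp only [Set.mem_union, Set.mem_setOf_eq]
          constructor
          · rintro ⟨hb, hble⟩
            have hbX : b ∈ X := atom_mem hX hb
            have hblt : b < x := lt_of_le_of_ne hble (fun h => hatom (h ▸ hb))
            rcases hsplit b ⟨hbX, bot_lt_iff_ne_bot.2 hb.1, hblt⟩ with h | h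
            · exact Or.inl ⟨hb, h⟩
            · exact Or.inr ⟨hb, h⟩
          · rintro (⟨hb, hble⟩ | ⟨hb, hble⟩)
            · exact ⟨hb, hble.trans hy1lt.le⟩
            · exact ⟨hb, hble.trans hy2lt.le⟩
        have hdf : Disjoint {w : L | w ∈ X ∧ ⊥ < w ∧ w ≤ y1}
            {w : L | w ∈ X ∧ ⊥ < w ∧ w ≤ y2} := by
          rw [Set.disjoint_left]
          rintro w ⟨-, hwb, h1⟩ ⟨-, -, h2⟩
          exact hwb.ne' (le_bot_iff.1 (hdisj ▸ le_inf h1 h2))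
        have hda : Disjoint {b : L | IsAtom b ∧ b ≤ y1} {b : L | IsAtom b ∧ b ≤ y2} := by
          rw [Set.disjoint_left]
          rintro b ⟨hb, h1⟩ ⟨-, h2⟩
          exact hb.1 (le_bot_iff.1 (hdisj ▸ le_inf h1 h2))
        have hxnot : x ∉ {w : L | w ∈ X ∧ ⊥ < w ∧ w ≤ y1} ∪
            {w : L | w ∈ X ∧ ⊥ < w ∧ w ≤ y2} := by
          rintro (⟨-, -, h⟩ | ⟨-, -, h⟩)
          · exact hy1lt.not_ge h
          · exact hy2lt.not_ge h
        have hrk : Rk x + 1 = Rk y1 + Rk y2 := by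
          rw [← hzx]; exact rk_sup hdisj
        have hih1 := ih y1 (by have := Rk_strict hy1lt; omega) hy1X hy1bot
        have hih2 := ih y2 (by have := Rk_strict hy2lt; omega) hy2X hy2bot
        rw [hfset, haset, Set.ncard_insert_of_notMem hxnot (Set.toFinite _),
          Set.ncard_union_eq hdf (Set.toFinite _) (Set.toFinite _),
          Set.ncard_union_eq hda (Set.toFinite _) (Set.toFinite _)]
        omega

end MainCount


theorem distrib_maxCDIndep_card {L : Type*} [DistribLattice L] [Fintype L]
    [BoundedOrder L] [Nontrivial L] (X : Set L) (hX : MaxCDIndep X) :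
    X.ncard = latLen L + atomsCard L := by
  have htop : (⊤ : L) ∈ X := top_mem' hX
  have hbot : (⊥ : L) ∈ X := bot_mem' hX
  have hmain := main_count X hX (Rk (⊤ : L)) ⊤ le_rfl htop bot_lt_top
  have hfs : {w : L | w ∈ X ∧ ⊥ < w ∧ w ≤ ⊤} = X \ {⊥} := by
    ext w
    simp only [Set.mem_setOf_eq, Set.mem_diff, Set.mem_singleton_iff, le_top, and_true]
    exact ⟨fun h => ⟨h.1, h.2.ne'⟩, fun h => ⟨h.1, bot_lt_iff_ne_bot.2 h.2⟩⟩
  have has : {b : L | IsAtom b ∧ b ≤ ⊤} = {a : L | IsAtom a} := by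
    ext b; simp [le_top]
  rw [hfs, has] at hmain
  have hdiff : (X \ {⊥}).ncard + 1 = X.ncard :=
    Set.ncard_diff_singleton_add_one hbot (Set.toFinite _)
  have hlat : latLen L + 1 = Rk (⊤ : L) := by
    have h1 : Fsup (Set.univ : Set L) = Rk (⊤ : L) := by
      rw [Rk, Set.Iic_top]
    have h2 : 1 ≤ Rk (⊤ : L) := Rk_pos ⊤
    have h3 : latLen L = Fsup (Set.univ : Set L) - 1 := chainLen_eq_Fsup _
    omega
  have : atomsCard L = {a : L | IsAtom a}.ncard := rfl
  omega
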